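/- If κ ≥ ℓ_g, then for all u, v ∈ V one has ⟨u − v, g_κ(v) − L_κ u⟩ ≤ E[v] − E[u] − (1/2)·⟨u − v, L_κ(u − v)⟩. -/

import Mathlib

open scoped RealInnerProductSpace NNReal

lemma descent_aux
    {V : Type*} [NormedAddCommGroup V] [InnerProductSpace ℝ V] [CompleteSpace V]
    (G : V → ℝ) (gradG : V → V)
    (hG : ∀ x, HasGradientAt G (gradG x) x)
    (ℓ : ℝ≥0) (hLip : LipschitzWith ℓ gradG)
    (v w : V) :
    G (v + w) ≤ G v + ⟪gradG v, w⟫ + (ℓ : ℝ) / 2 * ‖w‖ ^ 2 := by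
  set φ : ℝ → ℝ := fun t => G (v + t • w) - t * ⟪gradG v, w⟫ - t ^ 2 * ((ℓ : ℝ) / 2 * ‖w‖ ^ 2)
  have hline : ∀ t : ℝ, HasDerivAt (fun s : ℝ => v + s • w) w t := by
    intro t
    simpa using ((hasDerivAt_id t).smul_const w).const_add v
  have hφ' : ∀ t : ℝ, HasDerivAt φ
      (⟪gradG (v + t • w), w⟫ - ⟪gradG v, w⟫ - t * (2 * ((ℓ : ℝ) / 2 * ‖w‖ ^ 2))) t := by
    intro t
    have h1 : HasDerivAt (fun s : ℝ => G (v + s • w)) ⟪gradG (v + t • w), w⟫ t := by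
      have := ((hG (v + t • w)).hasFDerivAt).comp_hasDerivAt t (hline t)
      simp at this
      exact this
    have h2 : HasDerivAt (fun s : ℝ => s * ⟪gradG v, w⟫) ⟪gradG v, w⟫ t := by
      simpa using (hasDerivAt_id t).mul_const (⟪gradG v, w⟫)
    have h3 : HasDerivAt (fun s : ℝ => s ^ 2 * ((ℓ : ℝ) / 2 * ‖w‖ ^ 2))
        (2 * t * ((ℓ : ℝ) / 2 * ‖w‖ ^ 2)) t := by
      simpa using ((hasDerivAt_pow 2 t).mul_const ((ℓ : ℝ) / 2 * ‖w‖ ^ 2))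
    have := (h1.sub h2).sub h3
    refine this.congr_deriv ?_
    ring
  have hanti : AntitoneOn φ (Set.Icc 0 1) := by
    apply antitoneOn_of_deriv_nonpos (convex_Icc 0 1)
    · have hdiff : Differentiable ℝ φ := fun t => (hφ' t).differentiableAt
      exact hdiff.continuous.continuousOn
    · intro t ht
      exact ((hφ' t).differentiableAt).differentiableWithinAt
    · intro t ht
      rw [interior_Icc] at ht
      rw [(hφ' t).deriv]
      have hb : ⟪gradG (v + t • w) - gradG v, w⟫ ≤ (ℓ : ℝ) * t * ‖w‖ ^ 2 := by
        calc ⟪gradG (v + t • w) - gradG v, w⟫ ≤ ‖gradG (v + t • w) - gradG v‖ * ‖w‖ :=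
              real_inner_le_norm _ _
          _ ≤ ((ℓ : ℝ) * ‖(v + t • w) - v‖) * ‖w‖ := by
              gcongr
              simpa [dist_eq_norm] using hLip.dist_le_mul (v + t • w) v
          _ = (ℓ : ℝ) * t * ‖w‖ ^ 2 := by
              rw [add_sub_cancel_left, norm_smul, Real.norm_eq_abs,
                abs_of_pos ht.1]
              ring
      have : ⟪gradG (v + t • w), w⟫ - ⟪gradG v, w⟫ ≤ (ℓ : ℝ) * t * ‖w‖ ^ 2 := by
        rw [inner_sub_left] at hb; exact hb
      nlinarith
  have h01 := hanti (by simp : (0:ℝ) ∈ Set.Icc (0:ℝ) 1) (by simp : (1:ℝ) ∈ Set.Icc (0:ℝ) 1)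
    (by norm_num)
  simp only [φ, zero_smul, one_smul, add_zero, zero_mul, sub_zero, one_mul, one_pow,
    zero_pow, mul_zero] at h01
  linarith [h01]

theorem stmt_2
    {V : Type*} [NormedAddCommGroup V] [InnerProductSpace ℝ V] [FiniteDimensional ℝ V]
    (L : V →ₗ[ℝ] V)
    (hLsymm : ∀ x y : V, ⟪L x, y⟫ = ⟪x, L y⟫)
    (hLpos : ∀ x : V, 0 ≤ ⟪x, L x⟫)
    (G : V → ℝ) (gradG : V → V)
    (hG : ∀ x, HasGradientAt G (gradG x) x)
    (ℓ : ℝ≥0) (hℓ : 0 < ℓ)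
    (hLip : LipschitzWith ℓ gradG)
    (κ : ℝ) (hκ : (ℓ : ℝ) ≤ κ)
    (E : V → ℝ) (hE : ∀ v, E v = (1/2) * ⟪v, L v⟫ + G v)
    (Lκ : V → V) (hLκ : ∀ v, Lκ v = L v + κ • v)
    (gκ : V → V) (hgκ : ∀ v, gκ v = -gradG v + κ • v)
    (u v : V) :
    ⟪u - v, gκ v - Lκ u⟫ ≤ E v - E u - (1/2) * ⟪u - v, Lκ (u - v)⟫ := by
  have key : G u ≤ G v + ⟪gradG v, u - v⟫ + (ℓ : ℝ) / 2 * ‖u - v‖ ^ 2 := by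
    simpa using descent_aux G gradG hG ℓ hLip v (u - v)
  have hsym : ⟪v, L u⟫ = ⟪u, L v⟫ := by
    rw [← hLsymm u v, real_inner_comm]
  have hnorm : ⟪u - v, u - v⟫ = ‖u - v‖ ^ 2 := real_inner_self_eq_norm_sq _
  have hgv : ⟪gradG v, u - v⟫ = ⟪u - v, gradG v⟫ := real_inner_comm _ _
  rw [hE, hE, hLκ, hgκ, hLκ]
  simp only [map_sub, inner_sub_left, inner_sub_right, inner_add_right, inner_neg_right,
    real_inner_smul_right, inner_smul_right]
  have hS : ⟪u, u⟫ - ⟪v, u⟫ - (⟪u, v⟫ - ⟪v, v⟫) = ‖u - v‖ ^ 2 := by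
    rw [← real_inner_self_eq_norm_sq, inner_sub_left, inner_sub_right, inner_sub_right]
    ring
  have huv : ⟪u, v⟫ = ⟪v, u⟫ := real_inner_comm _ _
  have hκS : κ * (⟪u, u⟫ - ⟪v, u⟫ - (⟪u, v⟫ - ⟪v, v⟫)) = κ * ‖u - v‖ ^ 2 := by rw [hS]
  have hκuv : κ * ⟪u, v⟫ = κ * ⟪v, u⟫ := by rw [huv]
  have key' : G u ≤ G v + (⟪u, gradG v⟫ - ⟪v, gradG v⟫) + (ℓ : ℝ) / 2 * ‖u - v‖ ^ 2 := by
    rw [inner_sub_right, real_inner_comm u (gradG v), real_inner_comm v (gradG v)] at key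
    exact key
  have hk2 : (ℓ : ℝ) / 2 * ‖u - v‖ ^ 2 ≤ κ / 2 * ‖u - v‖ ^ 2 := by
    have : (0:ℝ) ≤ ‖u - v‖ ^ 2 := by positivity
    nlinarith
  linarith [key', hsym, hκS, hκuv, hk2]
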